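/- For x ∈ M let D = (1 + q(x))² + 4(x⁰)², which is strictly positive. Set c = −(1 + q(x) + 2i x⁰)/√D and U′ = D^{−1/2}·[[1−q(x)+2ix³, 2(ix¹+x²)],[2(ix¹−x²), 1−q(x)−2ix³]]. Then |c| = 1, U′ ∈ SU(2) (unitary with determinant 1), and ψ(x) = c·U′. Writing U′ = [[conj(α), β],[−conj(β), α]] with |α|² + |β|² = 1, the vector f = (Im β, Re β, −Im α, −Im c, Re α, Re c) ∈ ℝ⁶ satisfies f = (2/√D) · (x¹, x², x³, x⁰, (1−q(x))/2, −(1+q(x))/2); in particular f is a positive multiple of the standard conformal embedding of x, so the U(2) compactification and the ℝ⁶ null-cone compactification agree. -/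

import Mathlib

noncomputable section

open Matrix Complex

abbrev Mat2 := Matrix (Fin 2) (Fin 2) ℂ

/-- Minkowski quadratic form on ℝ⁴. -/
def mq (x : Fin 4 → ℝ) : ℝ := -(x 0)^2 + (x 1)^2 + (x 2)^2 + (x 3)^2

/-- The isomorphism of Minkowski space with Hermitian 2×2 matrices. -/
def mphi (x : Fin 4 → ℝ) : Mat2 :=
  !![(x 0 : ℂ) + (x 3 : ℂ), (x 1 : ℂ) - Complex.I * (x 2 : ℂ);
     (x 1 : ℂ) + Complex.I * (x 2 : ℂ), (x 0 : ℂ) - (x 3 : ℂ)]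

/-- The Cayley transform. -/
def cayley (X : Mat2) : Mat2 := (X - Complex.I • 1) * (X + Complex.I • 1)⁻¹

/-- ψ = u ∘ φ : M → U(2). -/
def mpsi (x : Fin 4 → ℝ) : Mat2 := cayley (mphi x)

/-- D = (1 + q(x))² + 4(x⁰)². -/
def Dq (x : Fin 4 → ℝ) : ℝ := (1 + mq x)^2 + 4 * (x 0)^2

/-- The U(1) part c of ψ(x). -/
def cPh (x : Fin 4 → ℝ) : ℂ :=
  -((1 : ℂ) + (mq x : ℂ) + 2 * Complex.I * (x 0 : ℂ)) / (Real.sqrt (Dq x) : ℂ)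

/-- The SU(2) part U′ of ψ(x). -/
def Usu (x : Fin 4 → ℝ) : Mat2 :=
  ((Real.sqrt (Dq x) : ℂ))⁻¹ •
    !![1 - (mq x : ℂ) + 2 * Complex.I * (x 3 : ℂ), 2 * (Complex.I * (x 1 : ℂ) + (x 2 : ℂ));
       2 * (Complex.I * (x 1 : ℂ) - (x 2 : ℂ)), 1 - (mq x : ℂ) - 2 * Complex.I * (x 3 : ℂ)]

set_option maxHeartbeats 1600000 in
theorem stmt19 (x : Fin 4 → ℝ) :
    0 < Dq x ∧
    ‖cPh x‖ = 1 ∧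
    Usu x ∈ Matrix.unitaryGroup (Fin 2) ℂ ∧ (Usu x).det = 1 ∧
    mpsi x = cPh x • Usu x ∧
    -- U′ has the form [[conj α, β], [−conj β, α]] with α = U′₁₁, β = U′₀₁
    Usu x 0 0 = (starRingEnd ℂ) (Usu x 1 1) ∧
    Usu x 1 0 = -(starRingEnd ℂ) (Usu x 0 1) ∧
    ‖Usu x 1 1‖^2 + ‖Usu x 0 1‖^2 = 1 ∧
    -- the vector f = (Im β, Re β, −Im α, −Im c, Re α, Re c) is (2/√D) times the
    -- standard conformal embedding (x¹,x²,x³,x⁰,(1−q)/2,−(1+q)/2)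
    (![(Usu x 0 1).im, (Usu x 0 1).re, -(Usu x 1 1).im, -(cPh x).im,
       (Usu x 1 1).re, (cPh x).re] : Fin 6 → ℝ) =
      (2 / Real.sqrt (Dq x)) •
        (![x 1, x 2, x 3, x 0, (1 - mq x)/2, -(1 + mq x)/2] : Fin 6 → ℝ) := by
  have hD : 0 < Dq x := by
    have h1 : Dq x = ((x 1)^2+(x 2)^2+(x 3)^2 - (x 0)^2)^2 + 2*((x 1)^2+(x 2)^2+(x 3)^2) + 2*(x 0)^2 + 1 := by
      simp only [Dq, mq]; ring
    nlinarith [sq_nonneg ((x 1)^2+(x 2)^2+(x 3)^2 - (x 0)^2), sq_nonneg (x 0), sq_nonneg (x 1), sq_nonneg (x 2), sq_nonneg (x 3)]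
  set s : ℝ := Real.sqrt (Dq x) with hs_def
  have hs : 0 < s := Real.sqrt_pos.2 hD
  have hs2 : s ^ 2 = Dq x := Real.sq_sqrt hD.le
  have hsc : (s : ℂ) ≠ 0 := by exact_mod_cast hs.ne'
  have hs2c : (s : ℂ) ^ 2 = ((1 + mq x)^2 + 4 * (x 0)^2 : ℝ) := by
    exact_mod_cast hs2
  have hs2c' : (s : ℂ) * (s : ℂ) = (1 + (mq x : ℂ))^2 + 4 * ((x 0 : ℂ))^2 := by
    rw [← sq, hs2c]; push_cast; ring
  -- |c| = 1
  have habs : ‖cPh x‖ = 1 := by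
    have h1 : ‖cPh x‖ ^ 2 = 1 := by
      rw [cPh, ← hs_def]
      rw [norm_div, div_pow, Complex.sq_norm, Complex.sq_norm]
      have hre : (-((1 : ℂ) + (mq x : ℂ) + 2 * Complex.I * (x 0 : ℂ))).re = -(1 + mq x) := by simp
      have him : (-((1 : ℂ) + (mq x : ℂ) + 2 * Complex.I * (x 0 : ℂ))).im = -(2 * x 0) := by simp
      rw [Complex.normSq_apply, hre, him, Complex.normSq_ofReal]
      rw [div_eq_one_iff_eq (by positivity)]
      rw [show s*s = Dq x from by rw [← sq, hs2], Dq]; ring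
    have := norm_nonneg (cPh x)
    nlinarith
  have hq : (mq x : ℂ) = -((x 0:ℂ))^2 + (x 1:ℂ)^2 + (x 2:ℂ)^2 + (x 3:ℂ)^2 := by
    simp only [mq]; push_cast; ring
  have hs2q : (s:ℂ)*(s:ℂ) = (1 + (-((x 0:ℂ))^2 + (x 1:ℂ)^2 + (x 2:ℂ)^2 + (x 3:ℂ)^2))^2 + 4*((x 0:ℂ))^2 := by
    rw [hs2c', hq]
  have hU00 : Usu x 0 0 = (s:ℂ)⁻¹ * (1 - (mq x:ℂ) + 2*Complex.I*(x 3:ℂ)) := by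
    simp [Usu, ← hs_def]
  have hU01 : Usu x 0 1 = (s:ℂ)⁻¹ * (2*(Complex.I*(x 1:ℂ) + (x 2:ℂ))) := by
    simp [Usu, ← hs_def]
  have hU10 : Usu x 1 0 = (s:ℂ)⁻¹ * (2*(Complex.I*(x 1:ℂ) - (x 2:ℂ))) := by
    simp [Usu, ← hs_def]
  have hU11 : Usu x 1 1 = (s:ℂ)⁻¹ * (1 - (mq x:ℂ) - 2*Complex.I*(x 3:ℂ)) := by
    simp [Usu, ← hs_def]
  -- conj structure
  have hconj1 : Usu x 0 0 = (starRingEnd ℂ) (Usu x 1 1) := by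
    rw [hU00, hU11]
    simp [Complex.ext_iff]
  have hconj2 : Usu x 1 0 = -(starRingEnd ℂ) (Usu x 0 1) := by
    rw [hU10, hU01]
    simp [Complex.ext_iff]
  -- det
  have hdet : (Usu x).det = 1 := by
    rw [Matrix.det_fin_two, hU00, hU01, hU10, hU11, hq]
    field_simp
    linear_combination -hs2q - (4*((x 1:ℂ))^2 + 4*((x 3:ℂ))^2) * Complex.I_sq
  have hdet2 : Usu x 0 0 * Usu x 1 1 - Usu x 0 1 * Usu x 1 0 = 1 := by
    rw [← Matrix.det_fin_two]; exact hdet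
  -- conj entry facts (star form)
  have hc00s : star (Usu x 0 0) = Usu x 1 1 := by
    rw [← starRingEnd_apply, hconj1, Complex.conj_conj]
  have hc11s : star (Usu x 1 1) = Usu x 0 0 := by
    rw [← starRingEnd_apply, ← hconj1]
  have hc01s : star (Usu x 0 1) = -(Usu x 1 0) := by
    rw [← starRingEnd_apply, hconj2]; simp
  have hc10s : star (Usu x 1 0) = -(Usu x 0 1) := by
    rw [← starRingEnd_apply, hconj2]; simp
  -- unitarity
  have h4 : star (Usu x) = !![Usu x 1 1, -(Usu x 0 1); -(Usu x 1 0), Usu x 0 0] := by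
    ext i j
    fin_cases i <;> fin_cases j <;>
      simp [Matrix.star_apply, hc00s, hc01s, hc10s, hc11s]
  have hmem : Usu x ∈ Matrix.unitaryGroup (Fin 2) ℂ := by
    rw [Matrix.mem_unitaryGroup_iff, h4]
    ext i j
    fin_cases i <;> fin_cases j <;>
      simp [Matrix.mul_apply, Fin.sum_univ_two, Matrix.one_apply] <;>
      first
        | ring1
        | linear_combination hdet2
        | linear_combination -hdet2
  -- norm sum
  have hnorm : ‖Usu x 1 1‖^2 + ‖Usu x 0 1‖^2 = 1 := by
    have e1 : ((‖Usu x 1 1‖^2 : ℝ) : ℂ)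
        = Usu x 1 1 * (starRingEnd ℂ) (Usu x 1 1) := by
      rw [Complex.sq_norm, ← Complex.mul_conj]
    have e2 : ((‖Usu x 0 1‖^2 : ℝ) : ℂ)
        = Usu x 0 1 * (starRingEnd ℂ) (Usu x 0 1) := by
      rw [Complex.sq_norm, ← Complex.mul_conj]
    have h1 : ((‖Usu x 1 1‖^2 + ‖Usu x 0 1‖^2 : ℝ) : ℂ) = 1 := by
      rw [Complex.ofReal_add, e1, e2, ← hconj1, show (starRingEnd ℂ) (Usu x 0 1) = -(Usu x 1 0) from hc01s]
      linear_combination hdet2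
    exact_mod_cast h1
  -- mpsi = c • U
  have hUm : Usu x = (s:ℂ)⁻¹ •
      !![1 - (mq x : ℂ) + 2 * Complex.I * (x 3 : ℂ), 2 * (Complex.I * (x 1 : ℂ) + (x 2 : ℂ));
         2 * (Complex.I * (x 1 : ℂ) - (x 2 : ℂ)), 1 - (mq x : ℂ) - 2 * Complex.I * (x 3 : ℂ)] := by
    rw [Usu, ← hs_def]
  have hDc : ((Dq x : ℝ):ℂ) = (s:ℂ)*(s:ℂ) := by
    rw [← hs2]; push_cast; ring
  have hDne : ((Dq x : ℝ):ℂ) ≠ 0 := by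
    rw [hDc]; exact mul_ne_zero hsc hsc
  have hcU : cPh x • Usu x = ((Dq x : ℝ):ℂ)⁻¹ •
      ((-(1 + (mq x:ℂ)) - 2*Complex.I*(x 0:ℂ)) •
      !![1 - (mq x : ℂ) + 2 * Complex.I * (x 3 : ℂ), 2 * (Complex.I * (x 1 : ℂ) + (x 2 : ℂ));
         2 * (Complex.I * (x 1 : ℂ) - (x 2 : ℂ)), 1 - (mq x : ℂ) - 2 * Complex.I * (x 3 : ℂ)]) := by
    rw [hUm, smul_smul, smul_smul]
    congr 1
    have hc : cPh x = (-(1 + (mq x:ℂ)) - 2*Complex.I*(x 0:ℂ)) * (s:ℂ)⁻¹ := by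
      rw [cPh, ← hs_def]; ring
    rw [hc, hDc, mul_inv]; ring
  have hAeq : mphi x + Complex.I • 1 =
      !![(x 0:ℂ)+(x 3:ℂ)+Complex.I, (x 1:ℂ)-Complex.I*(x 2:ℂ);
         (x 1:ℂ)+Complex.I*(x 2:ℂ), (x 0:ℂ)-(x 3:ℂ)+Complex.I] := by
    ext i j; fin_cases i <;> fin_cases j <;> simp [mphi, Matrix.one_apply] <;> ring
  have hBeq : mphi x - Complex.I • 1 =
      !![(x 0:ℂ)+(x 3:ℂ)-Complex.I, (x 1:ℂ)-Complex.I*(x 2:ℂ);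
         (x 1:ℂ)+Complex.I*(x 2:ℂ), (x 0:ℂ)-(x 3:ℂ)-Complex.I] := by
    ext i j; fin_cases i <;> fin_cases j <;> simp [mphi, Matrix.one_apply] <;> ring
  have hdAne : (mphi x + Complex.I • 1).det ≠ 0 := by
    have hdA : (mphi x + Complex.I • 1).det = ((-(1+mq x):ℝ):ℂ) + 2*Complex.I*((x 0:ℝ):ℂ) := by
      rw [hAeq, Matrix.det_fin_two_of]
      apply Complex.ext <;> simp [mq, ← Complex.ofReal_pow] <;> try ring
    rw [hdA]
    intro h
    rw [Complex.ext_iff] at h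
    simp at h
    obtain ⟨h1, h2⟩ := h
    have : Dq x = 0 := by simp [Dq]; nlinarith
    linarith
  have key : (-(1 + (mq x:ℂ)) - 2*Complex.I*(x 0:ℂ)) •
      (!![1 - (mq x : ℂ) + 2 * Complex.I * (x 3 : ℂ), 2 * (Complex.I * (x 1 : ℂ) + (x 2 : ℂ));
          2 * (Complex.I * (x 1 : ℂ) - (x 2 : ℂ)), 1 - (mq x : ℂ) - 2 * Complex.I * (x 3 : ℂ)]
        * (mphi x + Complex.I • 1)) = ((Dq x : ℝ):ℂ) • (mphi x - Complex.I • 1) := by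
    rw [hAeq, hBeq]
    ext i j
    fin_cases i <;> fin_cases j <;>
      simp only [Matrix.smul_apply, Matrix.mul_apply, Fin.sum_univ_two, Matrix.of_apply,
        Matrix.cons_val', Matrix.cons_val_zero, Matrix.cons_val_one, Matrix.head_cons,
        Matrix.empty_val', Matrix.cons_val_fin_one, Matrix.head_fin_const, Fin.zero_eta,
        Fin.mk_one, smul_eq_mul] <;>
      (apply Complex.ext <;> simp [Dq, mq, ← Complex.ofReal_pow] <;> ring)
  have h1 : (cPh x • Usu x) * (mphi x + Complex.I • 1) = mphi x - Complex.I • 1 := by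
    rw [hcU, Matrix.smul_mul, Matrix.smul_mul, key, smul_smul,
      inv_mul_cancel₀ hDne, one_smul]
  have hpsi : mpsi x = cPh x • Usu x := by
    rw [mpsi, cayley, ← h1, Matrix.mul_assoc,
      Matrix.mul_nonsing_inv _ (isUnit_iff_ne_zero.2 hdAne), Matrix.mul_one]
  -- the vector equality
  have hvec : (![(Usu x 0 1).im, (Usu x 0 1).re, -(Usu x 1 1).im, -(cPh x).im,
       (Usu x 1 1).re, (cPh x).re] : Fin 6 → ℝ) =
      (2 / Real.sqrt (Dq x)) •
        (![x 1, x 2, x 3, x 0, (1 - mq x)/2, -(1 + mq x)/2] : Fin 6 → ℝ) := by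
    have hcre : (cPh x).re = -(1 + mq x)/s := by
      rw [cPh, ← hs_def, Complex.div_ofReal_re]
      simp
      try ring
    have hcim : (cPh x).im = -(2 * x 0)/s := by
      rw [cPh, ← hs_def, Complex.div_ofReal_im]
      simp
    funext i
    fin_cases i <;>
      simp [hU01, hU11, hcre, hcim, ← Complex.ofReal_inv, ← hs_def,
        show (5:Fin 6) = (4:Fin 5).succ from rfl, Matrix.cons_val_succ] <;>
      field_simp <;> ring
  exact ⟨hD, habs, hmem, hdet, hpsi, hconj1, hconj2, hnorm, hvec⟩
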